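/- Suppose γ_t·γ_a·t̄_a < γ_o·d̄ + 2·γ_v·d̄/V_d and f(x) > 0 for all x ∈ (0, L_x]. Then c(0) < c(x) for every x ∈ (0, L_x], so x_f = 0 is the unique minimizer of c on [0, L_x]. -/
import Mathlib


/-- Strict version of Result 1(a): under a strict cost inequality and strictly
positive demand density, x_f = 0 is the unique minimizer. -/
theorem fixed_route_unique_optimal
    (γt γa γw γo γv ta d H Vd Lx Tl : ℝ)
    (hγt : 0 < γt) (hγa : 0 < γa) (hγw : 0 < γw) (hγo : 0 < γo) (hγv : 0 < γv)
    (hta : 0 < ta) (hd : 0 < d) (hH : 0 < H) (hVd : 0 < Vd) (hLx : 0 < Lx)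
    (hTl : 0 ≤ Tl)
    (f : ℝ → ℝ) (hf : ContinuousOn f (Set.Icc 0 Lx))
    (hfpos : ∀ x ∈ Set.Icc (0:ℝ) Lx, 0 ≤ f x)
    (F : ℝ → ℝ) (hF : ∀ x, F x = ∫ t in (0:ℝ)..x, f t)
    (Λ : ℝ) (hΛ : Λ = F Lx)
    (c : ℝ → ℝ)
    (hc : ∀ x, c x =
      γt * γa * ta * (Λ - F x) + γt * γw * Λ * H / 2
      + (γt / Vd) * (∫ u in (0:ℝ)..Lx, F u)
      + γt * H * d * (F x) ^ 2 / (2 * Vd)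
      + γo * Lx / H + γo * d * F x
      + (2 * γv / H) * (Lx / Vd + H * d * F x / Vd + Tl))
    (hcond : γt * γa * ta < γo * d + 2 * γv * d / Vd)
    (hfpos' : ∀ x ∈ Set.Ioc (0:ℝ) Lx, 0 < f x) :
    ∀ x ∈ Set.Ioc (0:ℝ) Lx, c 0 < c x := by
  intro x hx
  obtain ⟨hx0, hxL⟩ := hx
  have hsub : Set.uIcc (0:ℝ) x ⊆ Set.Icc 0 Lx := by
    rw [Set.uIcc_of_le hx0.le]
    exact Set.Icc_subset_Icc le_rfl hxL
  have hint : IntervalIntegrable f MeasureTheory.volume 0 x :=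
    (hf.mono hsub).intervalIntegrable
  have hFx : 0 < F x := by
    rw [hF]
    apply intervalIntegral.intervalIntegral_pos_of_pos_on hint _ hx0
    intro t ht
    exact hfpos' t ⟨ht.1, ht.2.le.trans hxL⟩
  have hF0 : F 0 = 0 := by rw [hF, intervalIntegral.integral_same]
  have key : c x - c 0 = (γo * d + 2 * γv * d / Vd - γt * γa * ta) * F x
      + γt * H * d * (F x) ^ 2 / (2 * Vd) := by
    rw [hc x, hc 0, hF0]
    field_simp
    ring
  have h1 : 0 ≤ γt * H * d * (F x) ^ 2 / (2 * Vd) := by positivity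
  have hA : 0 < (γo * d + 2 * γv * d / Vd - γt * γa * ta) * F x :=
    mul_pos (by linarith) hFx
  linarith
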